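/- Assume additionally q^+ < p^-_*. Then there exists a generalized N-function R : ℝ^d × [0,∞) → [0,∞), R(x,t) = ∫₀^t r(x,s) ds, such that: (1) there are constants 1 < r^- ≤ r^+ < p^-_*/q^+ with r^- ≤ r(x,t)·t/R(x,t) ≤ r^+ for a.e. x and all t > 0; (2) there are c₁, c₂ > 0 with c₁ < R(x,1) < c₂ for a.e. x; (3) R∘H ≪ H_*, i.e. for every k > 0, R(x, H(x, k·t))/H_*(x,t) → 0 as t → ∞ uniformly in x. -/

import Mathlib

open MeasureTheory Real Filter Topology
open scoped ENNReal

noncomputable section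

def IsGeneralizedNFunction {d : ℕ} (Φ : EuclideanSpace ℝ (Fin d) → ℝ → ℝ) : Prop :=
  (∀ t : ℝ, 0 ≤ t → Measurable fun x => Φ x t) ∧
    ∀ᵐ x ∂(volume : Measure (EuclideanSpace ℝ (Fin d))),
      ContinuousOn (Φ x) (Set.Ici 0) ∧ ConvexOn ℝ (Set.Ici 0) (Φ x) ∧
      MonotoneOn (Φ x) (Set.Ici 0) ∧ Φ x 0 = 0 ∧ (∀ t, 0 < t → 0 < Φ x t) ∧
      Filter.Tendsto (fun t => Φ x t / t) (nhdsWithin 0 (Set.Ioi 0)) (nhds 0) ∧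
      Filter.Tendsto (fun t => Φ x t / t) Filter.atTop Filter.atTop

set_option maxHeartbeats 1000000 in
theorem statement17
    {d : ℕ} (hd : 3 ≤ d)
    (p q : EuclideanSpace ℝ (Fin d) → ℝ → ℝ)
    (μ : EuclideanSpace ℝ (Fin d) → ℝ)
    (h H : EuclideanSpace ℝ (Fin d) → ℝ → ℝ)
    (pm pp qm qp : ℝ)
    (hp_meas : ∀ t : ℝ, 0 ≤ t → Measurable fun x => p x t)
    (hq_meas : ∀ t : ℝ, 0 ≤ t → Measurable fun x => q x t)
    (hp_cont : ∀ x, ContinuousOn (p x) (Set.Ici 0))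
    (hq_cont : ∀ x, ContinuousOn (q x) (Set.Ici 0))
    (hpm2 : 2 ≤ pm) (hpmp : pm ≤ pp) (hppd : pp < (d : ℝ))
    (hqm2 : 2 ≤ qm) (hqmp : qm ≤ qp)
    (hpbd : ∀ᵐ x ∂(volume : Measure (EuclideanSpace ℝ (Fin d))), ∀ t, 0 ≤ t → pm ≤ p x t ∧ p x t ≤ pp)
    (hqbd : ∀ᵐ x ∂(volume : Measure (EuclideanSpace ℝ (Fin d))), ∀ t, 0 ≤ t → qm ≤ q x t ∧ q x t ≤ qp)
    (hpq : ∀ᵐ x ∂(volume : Measure (EuclideanSpace ℝ (Fin d))), ∀ t, 0 ≤ t →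
      p x t < q x t ∧ q x t < (d : ℝ) * pm / ((d : ℝ) - pm))
    (hp1 : ∀ x, ∀ t ∈ Set.Icc (0:ℝ) 1, p x t = p x 1)
    (hq1 : ∀ x, ∀ t ∈ Set.Icc (0:ℝ) 1, q x t = q x 1)
    (hpmono : ∀ x, MonotoneOn (p x) (Set.Ici 1))
    (hqmono : ∀ x, MonotoneOn (q x) (Set.Ici 1))
    (hμ0 : ∀ x, 0 ≤ μ x) (hμbd : ∃ M : ℝ, ∀ x, μ x ≤ M)
    (hμlip : ∃ K : NNReal, LipschitzWith K μ)
    (hh0 : ∀ x, h x 0 = 0)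
    (hhdef : ∀ x t, 0 < t → h x t = t ^ (p x t - 1) + μ x * t ^ (q x t - 1))
    (hHdef : ∀ x t, H x t = ∫ s in (0:ℝ)..|t|, h x s)
    (pinf qinf μinf : ℝ)
    (hpinf : pinf = Filter.limsup (fun x => p x 1) (Bornology.cobounded (EuclideanSpace ℝ (Fin d))))
    (hqinf : qinf = Filter.limsup (fun x => q x 1) (Bornology.cobounded (EuclideanSpace ℝ (Fin d))))
    (hμinf : μinf = Filter.limsup μ (Bornology.cobounded (EuclideanSpace ℝ (Fin d))))
    (Hc : EuclideanSpace ℝ (Fin d) → ℝ → ℝ)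
    (hHc : ∀ x t, Hc x t = if 1 ≤ t then H x t else t ^ pinf / pinf + μinf / qinf * t ^ qinf)
    (Nf Ninv Hstar : EuclideanSpace ℝ (Fin d) → ℝ → ℝ)
    (hNf : ∀ x t, 0 ≤ t →
      Nf x t = (∫ τ in (0:ℝ)..t, (τ / Hc x τ) ^ (1 / ((d:ℝ) - 1))) ^ (((d:ℝ) - 1) / (d:ℝ)))
    (hNinv0 : ∀ x s, 0 ≤ s → 0 ≤ Ninv x s)
    (hNinv1 : ∀ x s, 0 ≤ s → Nf x (Ninv x s) = s)
    (hNinv2 : ∀ x t, 0 ≤ t → Ninv x (Nf x t) = t)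
    (hHstar : ∀ x t, Hstar x t = Hc x (Ninv x t))
    (hqps : qp < (d : ℝ) * pm / ((d : ℝ) - pm)) :
    ∃ (R r : EuclideanSpace ℝ (Fin d) → ℝ → ℝ) (rm rp c₁ c₂ : ℝ),
      IsGeneralizedNFunction R ∧
      (∀ x t, 0 ≤ t → R x t = ∫ s in (0:ℝ)..t, r x s) ∧
      1 < rm ∧ rm ≤ rp ∧ rp < ((d : ℝ) * pm / ((d : ℝ) - pm)) / qp ∧
      (∀ᵐ x ∂(volume : Measure (EuclideanSpace ℝ (Fin d))), ∀ t, 0 < t →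
        rm ≤ r x t * t / R x t ∧ r x t * t / R x t ≤ rp) ∧
      0 < c₁ ∧ (∀ᵐ x ∂(volume : Measure (EuclideanSpace ℝ (Fin d))), c₁ < R x 1 ∧ R x 1 < c₂) ∧
      (∀ k > (0:ℝ), ∀ ε > (0:ℝ), ∃ T : ℝ, ∀ t, T ≤ t → ∀ x,
        R x (H x (k * t)) ≤ ε * Hstar x t) := by
  classical
  obtain ⟨M, hM⟩ := hμbd
  set D : ℝ := (d : ℝ) with hDdef
  have hD3 : (3:ℝ) ≤ D := by rw [hDdef]; exact_mod_cast hd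
  have hD1 : (1:ℝ) < D := by linarith
  have hDpos : (0:ℝ) < D := by linarith
  have hpm0 : (0:ℝ) < pm := by linarith
  have hpp0 : (0:ℝ) < pp := by linarith
  have hqp2 : (2:ℝ) ≤ qp := le_trans hqm2 hqmp
  have hqp0 : (0:ℝ) < qp := by linarith
  have hpmD : pm < D := lt_of_le_of_lt hpmp hppd
  have hDpm : (0:ℝ) < D - pm := by linarith
  set P : ℝ := D * pm / (D - pm) with hPdef
  have hP0 : 0 < P := div_pos (mul_pos hDpos hpm0) hDpm
  have hPq1 : 1 < P / qp := (one_lt_div hqp0).2 hqps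
  set α : ℝ := (1 + P / qp) / 2 with hαdef
  have hα1 : 1 < α := by rw [hαdef]; linarith
  have hα0 : 0 < α := by linarith
  have hαP : α < P / qp := by rw [hαdef]; linarith
  have hαqpP : qp * α < P := by
    have h1 := (lt_div_iff₀ hqp0).1 hαP
    have h2 : qp * α = α * qp := mul_comm _ _
    linarith
  set e1 : ℝ := 1 / (D - 1) with he1def
  set e2 : ℝ := (D - 1) / D with he2def
  have he1 : 0 < e1 := by rw [he1def]; exact div_pos one_pos (by linarith)
  have he2 : 0 < e2 := div_pos (by linarith) hDpos
  set γ : ℝ := (D - pm) / (D - 1) with hγdef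
  have hγ0 : 0 < γ := div_pos hDpm (by linarith)
  -- good set
  obtain ⟨S, hSm, hSc, hSgood⟩ :
      ∃ S : Set (EuclideanSpace ℝ (Fin d)), MeasurableSet S ∧
        volume Sᶜ = 0 ∧ ∀ x ∈ S,
          (∀ t, 0 ≤ t → pm ≤ p x t ∧ p x t ≤ pp) ∧
          (∀ t, 0 ≤ t → qm ≤ q x t ∧ q x t ≤ qp) ∧
          (∀ t, 0 ≤ t → p x t < q x t ∧ q x t < P) := by
    have hae := hpbd.and (hqbd.and hpq)
    rw [MeasureTheory.ae_iff] at hae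
    exact ⟨(toMeasurable volume _)ᶜ, (measurableSet_toMeasurable _ _).compl,
      by rw [compl_compl]; exact (measure_toMeasurable _).trans hae,
      fun x hx => not_not.1 (fun hc => hx (subset_toMeasurable _ _ hc))⟩
  have haeS : ∀ᵐ x ∂(volume : Measure (EuclideanSpace ℝ (Fin d))), x ∈ S := by
    rw [MeasureTheory.ae_iff]
    simpa [Set.compl_def] using hSc
  set M' : ℝ := max M 0 with hM'def
  have hM'0 : (0:ℝ) ≤ M' := le_max_right _ _
  have hμM' : ∀ x, μ x ≤ M' := fun x => le_trans (hM x) (le_max_left _ _)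
  -- basic facts about h and H
  have h_nonneg : ∀ x τ, 0 ≤ τ → 0 ≤ h x τ := by
    intro x τ hτ
    rcases eq_or_lt_of_le hτ with h0 | h0
    · rw [← h0, hh0]
    · rw [hhdef x τ h0]
      exact add_nonneg (Real.rpow_nonneg hτ (p x τ - 1))
        (mul_nonneg (hμ0 x) (Real.rpow_nonneg hτ (q x τ - 1)))
  have hHval : ∀ x s, 0 ≤ s → H x s = ∫ τ in (0:ℝ)..s, h x τ := by
    intro x s hs; rw [hHdef, abs_of_nonneg hs]
  have H_nonneg : ∀ x s, 0 ≤ H x s := by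
    intro x s; rw [hHdef]
    exact intervalIntegral.integral_nonneg (abs_nonneg s) (fun u hu => h_nonneg x u hu.1)
  -- continuity of h for good x
  have hcont_h : ∀ x ∈ S, ContinuousOn (h x) (Set.Ici 0) := by
    intro x hx
    have hbd := hSgood x hx
    have hgval : ∀ τ : ℝ, 0 ≤ τ →
        h x τ = τ ^ (p x τ - 1) + μ x * τ ^ (q x τ - 1) := by
      intro τ hτ
      rcases eq_or_lt_of_le hτ with h0 | h0
      · rw [← h0, hh0,
          Real.zero_rpow (by intro hc; linarith only [hc, (hbd.1 0 le_rfl).1, hpm2] : p x 0 - 1 ≠ 0),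
          Real.zero_rpow (by intro hc; linarith only [hc, (hbd.2.1 0 le_rfl).1, hqm2] : q x 0 - 1 ≠ 0)]
        ring
      · exact hhdef x τ h0
    have hgc : ContinuousOn (fun τ : ℝ => τ ^ (p x τ - 1) + μ x * τ ^ (q x τ - 1))
        (Set.Ici 0) := by
      intro τ0 hτ0
      rcases eq_or_lt_of_le (Set.mem_Ici.1 hτ0) with h0 | h0
      · -- at τ0 = 0
        have hp1' : (0:ℝ) ≤ p x 1 - 1 := by linarith only [(hbd.1 1 zero_le_one).1, hpm2]
        have hq1' : (0:ℝ) ≤ q x 1 - 1 := by linarith only [(hbd.2.1 1 zero_le_one).1, hqm2]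
        have hg0c : ContinuousWithinAt
            (fun τ : ℝ => τ ^ (p x 1 - 1) + μ x * τ ^ (q x 1 - 1)) (Set.Ici 0) τ0 := by
          apply ContinuousAt.continuousWithinAt
          exact (Real.continuousAt_rpow_const _ _ (Or.inr hp1')).add
            (continuousAt_const.mul (Real.continuousAt_rpow_const _ _ (Or.inr hq1')))
        apply hg0c.congr_of_eventuallyEq
        · have hmem : Set.Ici (0:ℝ) ∩ Set.Iio 1 ∈ nhdsWithin τ0 (Set.Ici 0) :=
            inter_mem_nhdsWithin _ (Iio_mem_nhds (by rw [← h0]; norm_num))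
          filter_upwards [hmem] with τ hτ
          rw [hp1 x τ ⟨hτ.1, le_of_lt hτ.2⟩, hq1 x τ ⟨hτ.1, le_of_lt hτ.2⟩]
        · rw [hp1 x τ0 ⟨hτ0, by rw [← h0]; exact zero_le_one⟩,
            hq1 x τ0 ⟨hτ0, by rw [← h0]; exact zero_le_one⟩]
      · -- τ0 > 0
        have hc1 : ContinuousWithinAt (fun τ : ℝ => τ ^ (p x τ - 1)) (Set.Ici 0) τ0 := by
          have hpair : ContinuousWithinAt (fun τ : ℝ => ((τ, p x τ - 1) : ℝ × ℝ))
              (Set.Ici 0) τ0 :=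
            continuousWithinAt_id.prodMk ((hp_cont x τ0 hτ0).sub continuousWithinAt_const)
          exact ContinuousAt.comp_continuousWithinAt
            (f := fun τ : ℝ => ((τ, p x τ - 1) : ℝ × ℝ))
            (Real.continuousAt_rpow _ (Or.inl (ne_of_gt h0))) hpair
        have hc2 : ContinuousWithinAt (fun τ : ℝ => τ ^ (q x τ - 1)) (Set.Ici 0) τ0 := by
          have hpair : ContinuousWithinAt (fun τ : ℝ => ((τ, q x τ - 1) : ℝ × ℝ))
              (Set.Ici 0) τ0 :=
            continuousWithinAt_id.prodMk ((hq_cont x τ0 hτ0).sub continuousWithinAt_const)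
          exact ContinuousAt.comp_continuousWithinAt
            (f := fun τ : ℝ => ((τ, q x τ - 1) : ℝ × ℝ))
            (Real.continuousAt_rpow _ (Or.inl (ne_of_gt h0))) hpair
        exact hc1.add (continuousWithinAt_const.mul hc2)
    exact hgc.congr (fun τ hτ => hgval τ hτ)
  have hint_h : ∀ x ∈ S, ∀ a b : ℝ, 0 ≤ a → a ≤ b → IntervalIntegrable (h x) volume a b := by
    intro x hx a b ha hab
    apply ContinuousOn.intervalIntegrable
    apply (hcont_h x hx).mono
    rw [Set.uIcc_of_le hab]
    exact fun τ hτ => le_trans ha hτ.1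
  -- upper bound on H
  have hHub : ∀ x ∈ S, ∀ s : ℝ, 1 ≤ s → H x s ≤ 2 * (1 + M') * s ^ qp := by
    intro x hx s hs
    have hs0 : (0:ℝ) ≤ s := by linarith only [hs]
    have hbd := hSgood x hx
    have h7 : (0:ℝ) ≤ 1 + M' := by linarith only [hM'0]
    have hg_int : IntervalIntegrable (fun τ : ℝ => (1 + M') * (1 + τ ^ (qp - 1))) volume 0 s :=
      ((intervalIntegrable_const).add
        (intervalIntegral.intervalIntegrable_rpow' (by linarith only [hqp2]))).const_mul _
    have hmono : H x s ≤ ∫ τ in (0:ℝ)..s, (1 + M') * (1 + τ ^ (qp - 1)) := by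
      rw [hHval x s hs0]
      apply intervalIntegral.integral_mono_on hs0 (hint_h x hx 0 s le_rfl hs0) hg_int
      intro τ hτ
      rcases eq_or_lt_of_le hτ.1 with h0 | h0
      · rw [← h0, hh0, Real.zero_rpow (by intro hc; linarith only [hc, hqp2] : qp - 1 ≠ 0)]
        norm_num
        linarith only [hM'0]
      · rw [hhdef x τ h0]
        have hp' := hbd.1 τ hτ.1
        have hq' := hbd.2.1 τ hτ.1
        have hpq' := hbd.2.2 τ hτ.1
        have h4 : 0 ≤ τ ^ (qp - 1) := Real.rpow_nonneg hτ.1 _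
        have h8 : 0 ≤ (1 + M') * τ ^ (qp - 1) := mul_nonneg h7 h4
        rcases le_or_gt τ 1 with hτ1 | hτ1
        · have h1 : τ ^ (p x τ - 1) ≤ 1 :=
            Real.rpow_le_one h0.le hτ1 (by linarith only [hp'.1, hpm2])
          have h2 : τ ^ (q x τ - 1) ≤ 1 :=
            Real.rpow_le_one h0.le hτ1 (by linarith only [hq'.1, hqm2])
          have h3 : μ x * τ ^ (q x τ - 1) ≤ M' * 1 :=
            mul_le_mul (hμM' x) h2 (Real.rpow_nonneg h0.le _) hM'0
          nlinarith only [h1, h3, h8]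
        · have h1 : τ ^ (p x τ - 1) ≤ τ ^ (qp - 1) :=
            Real.rpow_le_rpow_of_exponent_le hτ1.le (by linarith only [hpq'.1, hq'.2])
          have h2 : τ ^ (q x τ - 1) ≤ τ ^ (qp - 1) :=
            Real.rpow_le_rpow_of_exponent_le hτ1.le (by linarith only [hq'.2])
          have h3 : μ x * τ ^ (q x τ - 1) ≤ M' * τ ^ (qp - 1) :=
            mul_le_mul (hμM' x) h2 (Real.rpow_nonneg h0.le _) hM'0
          nlinarith only [h1, h3, h4, hM'0]
    have hcalc : (∫ τ in (0:ℝ)..s, (1 + M') * (1 + τ ^ (qp - 1)))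
        = (1 + M') * (s + s ^ qp / qp) := by
      rw [intervalIntegral.integral_const_mul]
      congr 1
      rw [intervalIntegral.integral_add intervalIntegrable_const
        (intervalIntegral.intervalIntegrable_rpow' (by linarith only [hqp2])),
        intervalIntegral.integral_const,
        integral_rpow (Or.inl (by linarith only [hqp2] : (-1:ℝ) < qp - 1))]
      have hqq : qp - 1 + 1 = qp := by ring
      rw [hqq, Real.zero_rpow (ne_of_gt hqp0)]
      simp only [smul_eq_mul, sub_zero, mul_one]
    have h5 : s ≤ s ^ qp := by
      calc s = s ^ (1:ℝ) := (Real.rpow_one s).symm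
        _ ≤ s ^ qp := Real.rpow_le_rpow_of_exponent_le hs (by linarith only [hqp2])
    have h6 : s ^ qp / qp ≤ s ^ qp :=
      div_le_self (Real.rpow_nonneg hs0 _) (by linarith only [hqp2])
    calc H x s ≤ (1 + M') * (s + s ^ qp / qp) := by rw [← hcalc]; exact hmono
      _ ≤ (1 + M') * (s ^ qp + s ^ qp) := by nlinarith only [h5, h6, h7]
      _ = 2 * (1 + M') * s ^ qp := by ring
  -- lower bound on H
  have hHlb : ∀ x ∈ S, ∀ τ : ℝ, 1 ≤ τ → τ ^ pm / pp ≤ H x τ := by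
    intro x hx u hu
    have hu0 : (0:ℝ) ≤ u := by linarith only [hu]
    have hbd := hSgood x hx
    have hsplit : H x u = (∫ τ in (0:ℝ)..1, h x τ) + ∫ τ in (1:ℝ)..u, h x τ := by
      rw [hHval x u hu0]
      exact (intervalIntegral.integral_add_adjacent_intervals
        (hint_h x hx 0 1 le_rfl zero_le_one) (hint_h x hx 1 u zero_le_one hu)).symm
    have hlow1 : (1:ℝ)/pp ≤ ∫ τ in (0:ℝ)..1, h x τ := by
      have hint1 : IntervalIntegrable (fun τ : ℝ => τ ^ (pp - 1)) volume 0 1 :=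
        intervalIntegral.intervalIntegrable_rpow' (by linarith only [hpmp, hpm2])
      have hmono := intervalIntegral.integral_mono_on zero_le_one hint1
        (hint_h x hx 0 1 le_rfl zero_le_one) (fun τ hτ => ?_)
      rw [integral_rpow (Or.inl (by linarith only [hpmp, hpm2] : (-1:ℝ) < pp - 1))] at hmono
      · have hppq : pp - 1 + 1 = pp := by ring
        rw [hppq, Real.one_rpow, Real.zero_rpow (ne_of_gt hpp0)] at hmono
        calc (1:ℝ)/pp = (1 - 0)/pp := by norm_num
          _ ≤ ∫ τ in (0:ℝ)..1, h x τ := hmono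
      · rcases eq_or_lt_of_le hτ.1 with h0 | h0
        · rw [← h0, hh0, Real.zero_rpow (by intro hc; linarith only [hc, hpmp, hpm2] : pp - 1 ≠ 0)]
        · have h1 : τ ^ (pp - 1) ≤ τ ^ (p x τ - 1) :=
            Real.rpow_le_rpow_of_exponent_ge h0 hτ.2 (by linarith only [(hbd.1 τ hτ.1).2])
          rw [hhdef x τ h0]
          have h2 : 0 ≤ μ x * τ ^ (q x τ - 1) :=
            mul_nonneg (hμ0 x) (Real.rpow_nonneg h0.le _)
          linarith only [h1, h2]
    have hlow2 : (u ^ pm - 1)/pm ≤ ∫ τ in (1:ℝ)..u, h x τ := by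
      have hint1 : IntervalIntegrable (fun τ : ℝ => τ ^ (pm - 1)) volume 1 u :=
        intervalIntegral.intervalIntegrable_rpow' (by linarith only [hpm2])
      have hmono := intervalIntegral.integral_mono_on hu hint1
        (hint_h x hx 1 u zero_le_one hu) (fun τ hτ => ?_)
      rw [integral_rpow (Or.inl (by linarith only [hpm2] : (-1:ℝ) < pm - 1))] at hmono
      · have hppq : pm - 1 + 1 = pm := by ring
        rw [hppq, Real.one_rpow] at hmono
        exact hmono
      · have h0 : (0:ℝ) < τ := by linarith only [hτ.1]
        have h1 : τ ^ (pm - 1) ≤ τ ^ (p x τ - 1) :=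
          Real.rpow_le_rpow_of_exponent_le hτ.1 (by linarith only [(hbd.1 τ h0.le).1])
        rw [hhdef x τ h0]
        have h2 : 0 ≤ μ x * τ ^ (q x τ - 1) :=
          mul_nonneg (hμ0 x) (Real.rpow_nonneg h0.le _)
        linarith only [h1, h2]
    have hupm : (1:ℝ) ≤ u ^ pm := by
      calc (1:ℝ) = 1 ^ pm := (Real.one_rpow pm).symm
        _ ≤ u ^ pm := Real.rpow_le_rpow zero_le_one hu hpm0.le
    have hA : (u ^ pm - 1) / pp ≤ (u ^ pm - 1) / pm :=
      div_le_div_of_nonneg_left (by linarith only [hupm]) hpm0 hpmp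
    have hB : u ^ pm / pp = 1/pp + (u ^ pm - 1)/pp := by field_simp; ring
    linarith only [hA, hB, hlow1, hlow2, hsplit]
  -- continuity of H on [1,u]
  have hHcont : ∀ x ∈ S, ∀ u : ℝ, 1 ≤ u → ContinuousOn (fun τ => H x τ) (Set.Icc 1 u) := by
    intro x hx u hu
    have hint : IntegrableOn (h x) (Set.uIcc 0 u) volume := by
      rw [Set.uIcc_of_le (by linarith : (0:ℝ) ≤ u)]
      exact ((hcont_h x hx).mono (fun τ hτ => hτ.1)).integrableOn_Icc
    have hcp : ContinuousOn (fun b => ∫ τ in (0:ℝ)..b, h x τ) (Set.uIcc 0 u) :=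
      intervalIntegral.continuousOn_primitive_interval hint
    have : ContinuousOn (fun b => ∫ τ in (0:ℝ)..b, h x τ) (Set.Icc 1 u) := by
      apply hcp.mono
      rw [Set.uIcc_of_le (by linarith : (0:ℝ) ≤ u)]
      exact fun τ hτ => ⟨by linarith [hτ.1], hτ.2⟩
    apply this.congr
    intro τ hτ
    exact hHval x τ (by linarith [hτ.1])
  -- the universal lower-range integrand
  set φ₀ : ℝ → ℝ := fun τ => (τ / (τ ^ pinf / pinf + μinf / qinf * τ ^ qinf)) ^ e1 with hφ₀def
  have hmem_ne1 : ∀ᵐ τ : ℝ ∂volume, τ ≠ (1:ℝ) := by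
    rw [MeasureTheory.ae_iff]
    simpa only [not_not, Set.setOf_eq_eq_singleton] using measure_singleton (1:ℝ)
  have K1 : ∀ x, ∀ u : ℝ, 0 ≤ u → u ≤ 1 →
      (∫ τ in (0:ℝ)..u, (τ / Hc x τ) ^ e1) = ∫ τ in (0:ℝ)..u, φ₀ τ := by
    intro x u h0 h1
    apply intervalIntegral.integral_congr_ae
    filter_upwards [hmem_ne1] with τ hτ hmem
    rw [Set.uIoc_of_le h0] at hmem
    have hτ1 : τ < 1 := lt_of_le_of_ne (hmem.2.trans h1) hτ
    rw [hHc x τ, if_neg (not_le.2 hτ1)]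
  have hNfeq : ∀ x, ∀ u : ℝ, 0 ≤ u →
      Nf x u = (∫ τ in (0:ℝ)..u, (τ / Hc x τ) ^ e1) ^ e2 := fun x u hu => hNf x u hu
  -- case analysis on integrability of φ₀
  by_cases hC : IntervalIntegrable φ₀ volume 0 1
  swap
  · -- degenerate case: contradiction
    exfalso
    set x0 : EuclideanSpace ℝ (Fin d) := 0 with hx0
    have he2ne : e2 ≠ 0 := ne_of_gt he2
    have h10 : Nf x0 1 = 0 := by
      rw [hNfeq x0 1 zero_le_one, K1 x0 1 zero_le_one le_rfl,
        intervalIntegral.integral_undef hC, Real.zero_rpow he2ne]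
    have h00 : Nf x0 0 = 0 := by
      rw [hNfeq x0 0 le_rfl, intervalIntegral.integral_same, Real.zero_rpow he2ne]
    have e1' := hNinv2 x0 1 zero_le_one
    have e0' := hNinv2 x0 0 le_rfl
    rw [h10] at e1'
    rw [h00] at e0'
    rw [e0'] at e1'
    norm_num at e1'
  -- main case
  set A : ℝ := ∫ τ in (0:ℝ)..1, φ₀ τ with hAdef
  set I : ℝ := ∫ τ in (0:ℝ)..1, |φ₀ τ| with hIdef
  have hI0 : 0 ≤ I := intervalIntegral.integral_nonneg zero_le_one (fun _ _ => abs_nonneg _)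
  have hAI : |A| ≤ I := intervalIntegral.abs_integral_le_integral_abs zero_le_one
  set T₀ : ℝ := I ^ e2 with hT₀def
  have hT₀0 : 0 ≤ T₀ := Real.rpow_nonneg hI0 e2
  -- K2 : beyond T₀, Ninv is at least 1 (for every x!)
  have K2 : ∀ x, ∀ t : ℝ, 0 ≤ t → T₀ < t → 1 ≤ Ninv x t := by
    intro x t ht hTt
    by_contra hlt
    push_neg at hlt
    have hu0 : 0 ≤ Ninv x t := hNinv0 x t ht
    have heq : t = (∫ τ in (0:ℝ)..(Ninv x t), φ₀ τ) ^ e2 := by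
      conv_lhs => rw [← hNinv1 x t ht]
      rw [hNfeq x _ hu0, K1 x _ hu0 hlt.le]
    have hle1 : |∫ τ in (0:ℝ)..(Ninv x t), φ₀ τ| ≤ ∫ τ in (0:ℝ)..(Ninv x t), |φ₀ τ| :=
      intervalIntegral.abs_integral_le_integral_abs hu0
    have hle2 : (∫ τ in (0:ℝ)..(Ninv x t), |φ₀ τ|) ≤ I := by
      rw [hIdef]
      have hmem : Ninv x t ∈ Set.uIcc (0:ℝ) 1 := by
        rw [Set.uIcc_of_le zero_le_one]; exact ⟨hu0, hlt.le⟩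
      have hsplit : (∫ τ in (0:ℝ)..(Ninv x t), |φ₀ τ|) + ∫ τ in (Ninv x t)..1, |φ₀ τ|
          = ∫ τ in (0:ℝ)..1, |φ₀ τ| :=
        intervalIntegral.integral_add_adjacent_intervals
          (hC.abs.mono_set (Set.uIcc_subset_uIcc Set.left_mem_uIcc hmem))
          (hC.abs.mono_set (Set.uIcc_subset_uIcc hmem Set.right_mem_uIcc))
      have hnn : 0 ≤ ∫ τ in (Ninv x t)..1, |φ₀ τ| :=
        intervalIntegral.integral_nonneg hlt.le (fun _ _ => abs_nonneg _)
      linarith only [hsplit, hnn]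
    have htle : t ≤ T₀ := by
      calc t = |t| := (abs_of_nonneg ht).symm
        _ = |(∫ τ in (0:ℝ)..(Ninv x t), φ₀ τ) ^ e2| := by rw [← heq]
        _ ≤ |∫ τ in (0:ℝ)..(Ninv x t), φ₀ τ| ^ e2 := Real.abs_rpow_le_abs_rpow _ _
        _ ≤ I ^ e2 := Real.rpow_le_rpow (abs_nonneg _) (hle1.trans hle2) he2.le
        _ = T₀ := rfl
    linarith only [hTt, htle]
  -- main quantitative bound for good x
  set C5 : ℝ := |A| + pp ^ e1 / γ with hC5def
  have hC50 : 0 < C5 := by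
    have : 0 < pp ^ e1 / γ := div_pos (Real.rpow_pos_of_pos hpp0 e1) hγ0
    have := abs_nonneg A
    rw [hC5def]; linarith
  set C6 : ℝ := C5 ^ e2 with hC6def
  have hC60 : 0 < C6 := Real.rpow_pos_of_pos hC50 e2
  set C9 : ℝ := C6 ^ P * pp with hC9def
  have hC90 : 0 < C9 := mul_pos (Real.rpow_pos_of_pos hC60 P) hpp0
  have KEY : ∀ x ∈ S, ∀ t : ℝ, T₀ < t → 1 ≤ t → t ^ P / C9 ≤ Hstar x t := by
    intro x hx t hTt ht1
    have ht0 : (0:ℝ) < t := by linarith only [ht1]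
    have hu1 : 1 ≤ Ninv x t := K2 x t ht0.le hTt
    set u : ℝ := Ninv x t with hudef
    have hu0 : (0:ℝ) ≤ u := by linarith only [hu1]
    have hHposu : ∀ τ : ℝ, 1 ≤ τ → 0 < H x τ := by
      intro τ hτ
      have hτ0 : (0:ℝ) < τ := by linarith only [hτ]
      exact lt_of_lt_of_le (div_pos (Real.rpow_pos_of_pos hτ0 pm) hpp0) (hHlb x hx τ hτ)
    have hfs_eq : Set.EqOn (fun τ : ℝ => (τ / Hc x τ) ^ e1)
        (fun τ : ℝ => (τ / H x τ) ^ e1) (Set.Icc 1 u) := by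
      intro τ hτ
      simp only
      rw [hHc x τ, if_pos hτ.1]
    have hψcont : ContinuousOn (fun τ : ℝ => (τ / H x τ) ^ e1) (Set.Icc 1 u) := by
      apply ContinuousOn.rpow_const
      · exact ContinuousOn.div continuousOn_id (hHcont x hx u hu1)
          (fun τ hτ => ne_of_gt (hHposu τ hτ.1))
      · exact fun τ hτ => Or.inr he1.le
    have hψint : IntervalIntegrable (fun τ : ℝ => (τ / H x τ) ^ e1) volume 1 u := by
      apply ContinuousOn.intervalIntegrable
      rwa [Set.uIcc_of_le hu1]
    have hfint2 : IntervalIntegrable (fun τ : ℝ => (τ / Hc x τ) ^ e1) volume 1 u := by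
      rw [intervalIntegrable_iff, Set.uIoc_of_le hu1]
      refine IntegrableOn.congr_fun ?_
        (fun τ hτ => (hfs_eq (Set.Ioc_subset_Icc_self hτ)).symm) measurableSet_Ioc
      have := hψint
      rwa [intervalIntegrable_iff, Set.uIoc_of_le hu1] at this
    have hfint1 : IntervalIntegrable (fun τ : ℝ => (τ / Hc x τ) ^ e1) volume 0 1 := by
      rw [intervalIntegrable_iff, Set.uIoc_of_le zero_le_one]
      have hCi : IntegrableOn φ₀ (Set.Ioc (0:ℝ) 1) volume := by
        have := hC
        rwa [intervalIntegrable_iff, Set.uIoc_of_le zero_le_one] at this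
      apply hCi.congr
      rw [Filter.EventuallyEq, ae_restrict_iff' measurableSet_Ioc]
      filter_upwards [hmem_ne1] with τ hτ hmem
      have hτ1 : τ < 1 := lt_of_le_of_ne hmem.2 hτ
      rw [hHc x τ, if_neg (not_le.2 hτ1)]
    set J : ℝ := ∫ τ in (1:ℝ)..u, (τ / H x τ) ^ e1 with hJdef
    have hJval : (∫ τ in (0:ℝ)..u, (τ / Hc x τ) ^ e1) = A + J := by
      rw [← intervalIntegral.integral_add_adjacent_intervals hfint1 hfint2]
      congr 1
      · exact K1 x 1 zero_le_one le_rfl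
      · exact intervalIntegral.integral_congr (by rw [Set.uIcc_of_le hu1]; exact hfs_eq)
    have htval : t = (A + J) ^ e2 := by
      conv_lhs => rw [← hNinv1 x t ht0.le]
      rw [hNfeq x u hu0, hJval]
    have hJ0 : 0 ≤ J := intervalIntegral.integral_nonneg hu1
      (fun τ hτ => Real.rpow_nonneg
        (div_nonneg (by linarith only [hτ.1]) (H_nonneg x τ)) e1)
    have hbpos : 0 < A + J := by
      by_contra hb
      push_neg at hb
      have habs : |A + J| ≤ |A| := by
        rw [abs_of_nonpos hb]
        calc -(A + J) ≤ -A := by linarith only [hJ0]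
          _ ≤ |A| := neg_le_abs A
      have htle : t ≤ T₀ := by
        calc t = |t| := (abs_of_nonneg ht0.le).symm
          _ = |(A + J) ^ e2| := by rw [← htval]
          _ ≤ |A + J| ^ e2 := Real.abs_rpow_le_abs_rpow _ _
          _ ≤ |A| ^ e2 := Real.rpow_le_rpow (abs_nonneg _) habs he2.le
          _ ≤ I ^ e2 := Real.rpow_le_rpow (abs_nonneg _) hAI he2.le
          _ = T₀ := rfl
      linarith only [htle, hTt]
    have hDne : D - 1 ≠ 0 := by intro hc; rw [sub_eq_zero] at hc; linarith only [hD1, hc.symm]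
    have hDne0 : D ≠ 0 := ne_of_gt hDpos
    have hDpmne : D - pm ≠ 0 := ne_of_gt hDpm
    have hγe : (1 - pm) * e1 = γ - 1 := by
      rw [he1def, hγdef]
      field_simp
      ring
    have hJb : J ≤ pp ^ e1 * (u ^ γ / γ) := by
      have hgint : IntervalIntegrable (fun τ : ℝ => pp ^ e1 * τ ^ (γ - 1)) volume 1 u :=
        (intervalIntegral.intervalIntegrable_rpow' (by linarith only [hγ0])).const_mul _
      have hmono := intervalIntegral.integral_mono_on hu1 hψint hgint (fun τ hτ => ?_)
      · rw [intervalIntegral.integral_const_mul,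
          integral_rpow (Or.inl (by linarith only [hγ0] : (-1:ℝ) < γ - 1))] at hmono
        have he' : γ - 1 + 1 = γ := by ring
        rw [he', Real.one_rpow] at hmono
        calc J ≤ pp ^ e1 * ((u ^ γ - 1)/γ) := hmono
          _ ≤ pp ^ e1 * (u ^ γ / γ) := by
              apply mul_le_mul_of_nonneg_left ?_ (Real.rpow_nonneg hpp0.le e1)
              apply div_le_div_of_nonneg_right (by linarith only [] : u ^ γ - 1 ≤ u ^ γ) hγ0.le
      · have hτ0 : (0:ℝ) < τ := by linarith only [hτ.1]
        have hHτ := hHlb x hx τ hτ.1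
        have hHpos := hHposu τ hτ.1
        have hdiv : τ / H x τ ≤ pp * τ ^ (1 - pm) := by
          have h1 : τ / H x τ ≤ τ / (τ ^ pm / pp) :=
            div_le_div_of_nonneg_left hτ0.le
              (div_pos (Real.rpow_pos_of_pos hτ0 pm) hpp0) hHτ
          have h2 : τ / (τ ^ pm / pp) = pp * τ ^ (1 - pm) := by
            rw [Real.rpow_sub hτ0, Real.rpow_one]
            field_simp
            try ring
          linarith only [h1, h2]
        calc (τ / H x τ) ^ e1 ≤ (pp * τ ^ (1 - pm)) ^ e1 :=
              Real.rpow_le_rpow (div_nonneg hτ0.le (H_nonneg x τ)) hdiv he1.le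
          _ = pp ^ e1 * τ ^ (γ - 1) := by
              rw [Real.mul_rpow hpp0.le (Real.rpow_nonneg hτ0.le _),
                ← Real.rpow_mul hτ0.le, hγe]
    have hbb : A + J ≤ C5 * u ^ γ := by
      have h1 : (1:ℝ) ≤ u ^ γ := by
        calc (1:ℝ) = 1 ^ γ := (Real.one_rpow γ).symm
          _ ≤ u ^ γ := Real.rpow_le_rpow zero_le_one hu1 hγ0.le
      have h2 : A ≤ |A| := le_abs_self A
      have h3 : pp ^ e1 * (u ^ γ / γ) = pp ^ e1 / γ * u ^ γ := by ring
      have h4 : |A| ≤ |A| * u ^ γ := le_mul_of_one_le_right (abs_nonneg A) h1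
      have h5 : J ≤ pp ^ e1 / γ * u ^ γ := by rw [← h3]; exact hJb
      rw [hC5def]
      nlinarith only [h2, h4, h5]
    have htu : t ≤ C6 * u ^ (γ * e2) := by
      calc t = (A + J) ^ e2 := htval
        _ ≤ (C5 * u ^ γ) ^ e2 := Real.rpow_le_rpow hbpos.le hbb he2.le
        _ = C5 ^ e2 * (u ^ γ) ^ e2 := Real.mul_rpow hC50.le (Real.rpow_nonneg hu0 γ)
        _ = C6 * u ^ (γ * e2) := by rw [hC6def, ← Real.rpow_mul hu0]
    set θ : ℝ := D / (D - pm) with hθdef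
    have hθ0 : 0 < θ := div_pos hDpos hDpm
    have hge2θ : (γ * e2) * θ = 1 := by
      rw [hγdef, he2def, hθdef]
      rw [div_mul_div_comm, div_mul_div_comm, div_eq_one_iff_eq (by
        intro hc
        rcases mul_eq_zero.1 hc with hc1 | hc2
        · rcases mul_eq_zero.1 hc1 with hc3 | hc4
          · exact hDne hc3
          · exact hDne0 hc4
        · exact hDpmne hc2)]
      ring
    have hθpm : θ * pm = P := by
      rw [hθdef, hPdef]
      rw [div_mul_eq_mul_div]
    have htC6 : t / C6 ≤ u ^ (γ * e2) := by
      rw [div_le_iff₀ hC60]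
      calc t ≤ C6 * u ^ (γ * e2) := htu
        _ = u ^ (γ * e2) * C6 := by ring
    have hu_ge : (t / C6) ^ θ ≤ u := by
      calc (t / C6) ^ θ ≤ (u ^ (γ * e2)) ^ θ :=
            Real.rpow_le_rpow (div_nonneg ht0.le hC60.le) htC6 hθ0.le
        _ = u ^ ((γ * e2) * θ) := (Real.rpow_mul hu0 _ _).symm
        _ = u := by rw [hge2θ, Real.rpow_one]
    have hfinal : (t / C6) ^ P ≤ u ^ pm := by
      calc (t / C6) ^ P = ((t / C6) ^ θ) ^ pm := by
            rw [← Real.rpow_mul (div_nonneg ht0.le hC60.le), hθpm]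
        _ ≤ u ^ pm := Real.rpow_le_rpow
            (Real.rpow_nonneg (div_nonneg ht0.le hC60.le) θ) hu_ge hpm0.le
    have hHs : Hstar x t = H x u := by rw [hHstar, hHc, if_pos hu1]
    have hdivp : t ^ P / C9 = (t / C6) ^ P / pp := by
      rw [Real.div_rpow ht0.le hC60.le, hC9def, div_div]
    rw [hHs, hdivp]
    calc (t / C6) ^ P / pp ≤ u ^ pm / pp :=
          div_le_div_of_nonneg_right hfinal hpp0.le
      _ ≤ H x u := hHlb x hx u hu1
  -- the answer
  refine ⟨fun x t => if x ∈ S then t ^ α else 0,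
    fun x t => if x ∈ S then α * t ^ (α - 1) else 0,
    α, α, 1/2, 2, ⟨?_, ?_⟩, ?_, hα1, le_rfl, hαP, ?_, by norm_num, ?_, ?_⟩
  · -- measurability
    intro t ht
    exact Measurable.ite hSm measurable_const measurable_const
  · -- N-function properties a.e.
    filter_upwards [haeS] with x hx
    simp only [if_pos hx]
    refine ⟨?_, ?_, ?_, ?_, ?_, ?_, ?_⟩
    · exact (continuous_iff_continuousAt.2
        (fun y => Real.continuousAt_rpow_const y α (Or.inr hα0.le))).continuousOn
    · exact convexOn_rpow hα1.le
    · intro a ha b hb hab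
      exact Real.rpow_le_rpow ha hab hα0.le
    · exact Real.zero_rpow (ne_of_gt hα0)
    · exact fun t ht => Real.rpow_pos_of_pos ht α
    · have hcont : Tendsto (fun t : ℝ => t ^ (α - 1)) (nhdsWithin 0 (Set.Ioi 0)) (nhds 0) := by
        have hc : ContinuousAt (fun t : ℝ => t ^ (α - 1)) 0 :=
          Real.continuousAt_rpow_const 0 (α - 1) (Or.inr (by linarith))
        have := hc.tendsto
        rw [Real.zero_rpow (by intro hc0; linarith : α - 1 ≠ (0:ℝ))] at this
        exact this.mono_left nhdsWithin_le_nhds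
      apply hcont.congr'
      filter_upwards [self_mem_nhdsWithin] with t (ht : t ∈ Set.Ioi 0)
      rw [show α - 1 = α - 1 from rfl, Real.rpow_sub ht, Real.rpow_one]
    · have hcont : Tendsto (fun t : ℝ => t ^ (α - 1)) atTop atTop :=
        tendsto_rpow_atTop (by linarith)
      apply hcont.congr'
      filter_upwards [eventually_gt_atTop (0:ℝ)] with t ht
      rw [Real.rpow_sub ht, Real.rpow_one]
  · -- integral identity
    intro x t ht
    by_cases hx : x ∈ S
    · simp only [if_pos hx]
      rw [intervalIntegral.integral_const_mul,
        integral_rpow (Or.inl (by linarith : (-1:ℝ) < α - 1))]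
      have hsimp : α - 1 + 1 = α := by ring
      rw [hsimp, Real.zero_rpow (ne_of_gt hα0)]
      field_simp
      ring
    · simp only [if_neg hx]
      simp
  · -- ratio
    filter_upwards [haeS] with x hx t ht
    simp only [if_pos hx]
    have hne : t ^ α ≠ 0 := ne_of_gt (Real.rpow_pos_of_pos ht α)
    have hval : α * t ^ (α - 1) * t / t ^ α = α := by
      rw [mul_assoc, ← Real.rpow_add_one (ne_of_gt ht) (α - 1)]
      have hsimp : α - 1 + 1 = α := by ring
      rw [hsimp, mul_div_assoc, div_self hne, mul_one]
    rw [hval]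
    exact ⟨le_rfl, le_rfl⟩
  · -- c₁ < R x 1 < c₂
    filter_upwards [haeS] with x hx
    simp only [if_pos hx, Real.one_rpow]
    norm_num
  · -- the main decay condition
    intro k hk ε hε
    set C8 : ℝ := 2 * (1 + M') * k ^ qp with hC8def
    have hC80 : 0 < C8 := by
      rw [hC8def]
      have h1 : (0:ℝ) < 1 + M' := by linarith only [hM'0]
      exact mul_pos (mul_pos two_pos h1) (Real.rpow_pos_of_pos hk qp)
    set δ : ℝ := P - qp * α with hδdef
    have hδ0 : 0 < δ := by rw [hδdef]; linarith only [hαqpP]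
    set B : ℝ := C8 ^ α * C9 / ε with hBdef
    have hB0 : 0 < B := div_pos (mul_pos (Real.rpow_pos_of_pos hC80 α) hC90) hε
    set T₁ : ℝ := B ^ (1/δ) with hT₁def
    refine ⟨max (T₀ + 1) (max (1/k) (max 1 T₁)), ?_⟩
    intro t htT x
    have ht1 : (1:ℝ) ≤ t := le_trans (le_max_of_le_right (le_max_of_le_right (le_max_left _ _))) htT
    have ht0 : (0:ℝ) < t := by linarith only [ht1]
    have htT₀ : T₀ < t := by
      have h5 : T₀ + 1 ≤ t := le_trans (le_max_left _ _) htT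
      linarith only [h5]
    have htT₁ : T₁ ≤ t :=
      le_trans (le_max_of_le_right (le_max_of_le_right (le_max_right _ _))) htT
    have htk : 1/k ≤ t := le_trans (le_max_of_le_right (le_max_left _ _)) htT
    have hkt1 : (1:ℝ) ≤ k * t := by
      have := mul_le_mul_of_nonneg_left htk hk.le
      rwa [mul_one_div_cancel (ne_of_gt hk)] at this
    by_cases hx : x ∈ S
    · simp only [if_pos hx]
      -- upper bound on H x (k t)
      have hub : H x (k * t) ≤ C8 * t ^ qp := by
        have h1 := hHub x hx (k * t) hkt1
        rw [Real.mul_rpow hk.le ht0.le] at h1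
        rw [hC8def]
        calc H x (k * t) ≤ 2 * (1 + M') * (k ^ qp * t ^ qp) := h1
          _ = 2 * (1 + M') * k ^ qp * t ^ qp := by ring
      have hRle : (H x (k * t)) ^ α ≤ C8 ^ α * t ^ (qp * α) := by
        calc (H x (k * t)) ^ α ≤ (C8 * t ^ qp) ^ α :=
              Real.rpow_le_rpow (H_nonneg x _) hub hα0.le
          _ = C8 ^ α * (t ^ qp) ^ α :=
              Real.mul_rpow hC80.le (Real.rpow_nonneg ht0.le qp)
          _ = C8 ^ α * t ^ (qp * α) := by rw [← Real.rpow_mul ht0.le]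
      -- numeric comparison
      have hnum : C8 ^ α * t ^ (qp * α) ≤ ε * (t ^ P / C9) := by
        have htδ : B ≤ t ^ δ := by
          have h1 : T₁ ^ δ ≤ t ^ δ :=
            Real.rpow_le_rpow (Real.rpow_nonneg hB0.le _) htT₁ hδ0.le
          have h2 : T₁ ^ δ = B := by
            rw [hT₁def, ← Real.rpow_mul hB0.le, one_div_mul_cancel (ne_of_gt hδ0),
              Real.rpow_one]
          linarith only [h1, h2]
        have hsplit : t ^ P = t ^ (qp * α) * t ^ δ := by
          rw [← Real.rpow_add ht0]
          congr 1
          rw [hδdef]; ring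
        rw [hsplit]
        have h3 : C8 ^ α ≤ ε / C9 * t ^ δ := by
          have h4 : ε / C9 * B = C8 ^ α := by
            rw [hBdef]; field_simp
          rw [← h4]
          exact mul_le_mul_of_nonneg_left htδ (le_of_lt (div_pos hε hC90))
        calc C8 ^ α * t ^ (qp * α) ≤ (ε / C9 * t ^ δ) * t ^ (qp * α) :=
              mul_le_mul_of_nonneg_right h3 (Real.rpow_nonneg ht0.le _)
          _ = ε * (t ^ (qp * α) * t ^ δ / C9) := by ring
      have hHs : t ^ P / C9 ≤ Hstar x t := KEY x hx t htT₀ ht1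
      calc (H x (k * t)) ^ α ≤ C8 ^ α * t ^ (qp * α) := hRle
        _ ≤ ε * (t ^ P / C9) := hnum
        _ ≤ ε * Hstar x t := mul_le_mul_of_nonneg_left hHs hε.le
    · simp only [if_neg hx]
      have hNiv : 1 ≤ Ninv x t := K2 x t ht0.le htT₀
      have : Hstar x t = H x (Ninv x t) := by
        rw [hHstar, hHc, if_pos hNiv]
      rw [this]
      exact mul_nonneg hε.le (H_nonneg x _)
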